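/- Let K(h) denote the number of Fink–Mao region words of length h. Then for every h ≥ 4, K(h) + K(h−1) = 2^(h−3). -/

import Mathlib

/-- A region of the tie diagram: left, right, or center. -/
inductive Region : Type
  | L | R | C
deriving DecidableEq

open Region

/-- A Fink–Mao region word: a list of letters from {L, R, C} with consecutive
letters distinct, first letter `L`, ending with the suffix `L,R,C` or `R,L,C`. -/
def FMWord (w : List Region) : Prop :=
  w.Chain' (· ≠ ·) ∧ w.head? = some L ∧
    ([L, R, C] <:+ w ∨ [R, L, C] <:+ w)

/-- `K h` is the number of Fink–Mao region words of length `h`. -/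
noncomputable def K (h : ℕ) : ℕ := Nat.card {w : List Region // FMWord w ∧ w.length = h}

instance : Fintype Region := ⟨{L, R, C}, by intro x; cases x <;> simp⟩

/-- Chains starting with `L`, ending with `x`, of length `n`. -/
def Sset (x : Region) (n : ℕ) : Set (List Region) :=
  {w | w.Chain' (· ≠ ·) ∧ w.head? = some L ∧ w.getLast? = some x ∧ w.length = n}

noncomputable def dcnt (x : Region) (n : ℕ) : ℕ := (Sset x n).ncard

lemma Sset_finite (x : Region) (n : ℕ) : (Sset x n).Finite :=
  (List.finite_length_eq Region n).subset (fun _ hw => hw.2.2.2)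

lemma Sset_one_L : Sset L 1 = {[L]} := by
  ext w
  constructor
  · rintro ⟨-, h2, -, h4⟩
    obtain ⟨a, rfl⟩ : ∃ a, w = [a] := by
      match w, h4 with | [a], _ => exact ⟨a, rfl⟩
    simp only [List.head?_cons, Option.some.injEq] at h2
    simp [h2]
  · rintro rfl
    exact ⟨List.isChain_singleton _, rfl, rfl, rfl⟩

lemma Sset_one_ne (x : Region) (hx : x ≠ L) : Sset x 1 = ∅ := by
  ext w
  simp only [Set.mem_empty_iff_false, iff_false]
  rintro ⟨-, h2, h3, h4⟩
  obtain ⟨a, rfl⟩ : ∃ a, w = [a] := by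
    match w, h4 with | [a], _ => exact ⟨a, rfl⟩
  simp only [List.head?_cons, Option.some.injEq] at h2
  simp only [List.getLast?_singleton, Option.some.injEq] at h3
  exact hx (h3 ▸ h2 ▸ rfl)

lemma dcnt_one_L : dcnt L 1 = 1 := by
  unfold dcnt; rw [Sset_one_L]; exact Set.ncard_singleton _

lemma dcnt_one_R : dcnt R 1 = 0 := by
  unfold dcnt; rw [Sset_one_ne R (by decide)]; exact Set.ncard_empty _

lemma dcnt_one_C : dcnt C 1 = 0 := by
  unfold dcnt; rw [Sset_one_ne C (by decide)]; exact Set.ncard_empty _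

lemma Sset_succ (x : Region) (n : ℕ) (hn : n ≠ 0) :
    Sset x (n + 1) =
      (fun w => w ++ [x]) ''
        {w : List Region | w.Chain' (· ≠ ·) ∧ w.head? = some L ∧ w.length = n ∧
          w.getLast? ≠ some x} := by
  ext w
  constructor
  · rintro ⟨h1, h2, h3, h4⟩
    obtain ⟨u, rfl⟩ := List.getLast?_eq_some_iff.mp h3
    have hu : u ≠ [] := by
      rintro rfl; simp at h4; omega
    refine ⟨u, ⟨(List.isChain_append.mp h1).1, ?_, ?_, ?_⟩, rfl⟩
    · rwa [List.head?_append_of_ne_nil _ hu] at h2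
    · simp only [List.length_append, List.length_singleton] at h4; omega
    · intro hlast
      exact (List.isChain_append.mp h1).2.2 x hlast x rfl rfl
  · rintro ⟨u, ⟨h1, h2, h3, h4⟩, rfl⟩
    have hu : u ≠ [] := by rintro rfl; simp at h3; omega
    refine ⟨?_, ?_, List.getLast?_concat (l := u), by simp [h3]⟩
    · apply List.isChain_append.mpr
      refine ⟨h1, List.isChain_singleton x, ?_⟩
      intro a ha b hb
      simp only [List.head?_cons, Option.mem_def, Option.some.injEq] at hb
      subst hb
      rintro rfl
      exact h4 ha
    · rwa [List.head?_append_of_ne_nil _ hu]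

lemma region_cases (t x y z : Region) (h1 : y ≠ x) (h2 : z ≠ x) (h3 : y ≠ z)
    (h4 : t ≠ x) : t = y ∨ t = z := by
  revert h1 h2 h3 h4; cases t <;> cases x <;> cases y <;> cases z <;> decide

lemma filter_eq_union (x y z : Region) (h1 : y ≠ x) (h2 : z ≠ x) (h3 : y ≠ z)
    (n : ℕ) (hn : n ≠ 0) :
    {w : List Region | w.Chain' (· ≠ ·) ∧ w.head? = some L ∧ w.length = n ∧
      w.getLast? ≠ some x} = Sset y n ∪ Sset z n := by
  ext w
  constructor
  · rintro ⟨c1, c2, c3, c4⟩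
    have hw : w ≠ [] := by rintro rfl; simp at c3; omega
    obtain ⟨t, ht⟩ := Option.isSome_iff_exists.mp (List.getLast?_isSome.mpr hw)
    have htx : t ≠ x := by rintro rfl; exact c4 ht
    rcases region_cases t x y z h1 h2 h3 htx with rfl | rfl
    · exact Or.inl ⟨c1, c2, ht, c3⟩
    · exact Or.inr ⟨c1, c2, ht, c3⟩
  · rintro (⟨c1, c2, c3, c4⟩ | ⟨c1, c2, c3, c4⟩)
    · exact ⟨c1, c2, c4, by rw [c3]; simp [h1]⟩
    · exact ⟨c1, c2, c4, by rw [c3]; simp [h2]⟩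

lemma dcnt_succ (x y z : Region) (h1 : y ≠ x) (h2 : z ≠ x) (h3 : y ≠ z)
    (n : ℕ) (hn : n ≠ 0) : dcnt x (n + 1) = dcnt y n + dcnt z n := by
  unfold dcnt
  rw [Sset_succ x n hn,
    Set.ncard_image_of_injective _ (List.append_left_injective [x]),
    filter_eq_union x y z h1 h2 h3 n hn,
    Set.ncard_union_eq ?_ (Sset_finite y n) (Sset_finite z n)]
  rw [Set.disjoint_left]
  rintro w ⟨-, -, hy, -⟩ ⟨-, -, hz, -⟩
  rw [hy] at hz
  exact h3 (Option.some.injEq _ _ ▸ hz)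

lemma chain_pair {a b : Region} (h : a ≠ b) : List.Chain' (· ≠ ·) [a, b] := by
  apply List.isChain_cons_cons.mpr; exact ⟨h, List.isChain_singleton _⟩

lemma FM_eq (m : ℕ) :
    {w : List Region | FMWord w ∧ w.length = m + 3} =
      (fun v => v ++ [R, C]) '' Sset L (m + 1) ∪
      (fun v => v ++ [L, C]) '' Sset R (m + 1) := by
  ext w
  constructor
  · rintro ⟨⟨c1, c2, (⟨u, rfl⟩ | ⟨u, rfl⟩)⟩, c3⟩
    · refine Or.inl ⟨u ++ [L], ⟨?_, ?_, List.getLast?_concat (l := u), ?_⟩, by simp⟩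
      · have c1' : ((u ++ [L]) ++ [R, C]).Chain' (· ≠ ·) := by simpa using c1
        exact (List.isChain_append.mp c1').1
      · rcases u with _ | ⟨a, t⟩
        · simpa using c2
        · simpa using c2
      · simp only [List.length_append, List.length_cons] at c3 ⊢
        simp at c3 ⊢; omega
    · refine Or.inr ⟨u ++ [R], ⟨?_, ?_, List.getLast?_concat (l := u), ?_⟩, by simp⟩
      · have c1' : ((u ++ [R]) ++ [L, C]).Chain' (· ≠ ·) := by simpa using c1
        exact (List.isChain_append.mp c1').1
      · rcases u with _ | ⟨a, t⟩
        · simp at c2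
        · simpa using c2
      · simp at c3 ⊢; omega
  · rintro (⟨v, ⟨c1, c2, c3, c4⟩, rfl⟩ | ⟨v, ⟨c1, c2, c3, c4⟩, rfl⟩)
    · have hv : v ≠ [] := by rintro rfl; simp at c4
      obtain ⟨u, rfl⟩ := List.getLast?_eq_some_iff.mp c3
      refine ⟨⟨?_, ?_, Or.inl ⟨u, by simp⟩⟩, ?_⟩
      · apply List.isChain_append.mpr
        refine ⟨c1, chain_pair (by decide), ?_⟩
        intro a ha b hb
        rw [List.getLast?_concat] at ha
        simp only [Option.mem_def, Option.some.injEq] at ha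
        simp only [List.head?_cons, Option.mem_def, Option.some.injEq] at hb
        subst ha; subst hb; decide
      · rwa [List.head?_append_of_ne_nil _ hv]
      · simp only [List.length_append, List.length_cons, List.length_nil] at c4 ⊢; omega
    · have hv : v ≠ [] := by rintro rfl; simp at c4
      obtain ⟨u, rfl⟩ := List.getLast?_eq_some_iff.mp c3
      refine ⟨⟨?_, ?_, Or.inr ⟨u, by simp⟩⟩, ?_⟩
      · apply List.isChain_append.mpr
        refine ⟨c1, chain_pair (by decide), ?_⟩
        intro a ha b hb
        rw [List.getLast?_concat] at ha
        simp only [Option.mem_def, Option.some.injEq] at ha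
        simp only [List.head?_cons, Option.mem_def, Option.some.injEq] at hb
        subst ha; subst hb; decide
      · rwa [List.head?_append_of_ne_nil _ hv]
      · simp only [List.length_append, List.length_cons, List.length_nil] at c4 ⊢; omega

lemma K_eq (m : ℕ) : K (m + 3) = dcnt L (m + 1) + dcnt R (m + 1) := by
  have h0 : K (m + 3) = ({w : List Region | FMWord w ∧ w.length = m + 3}).ncard :=
    Nat.card_coe_set_eq _
  rw [h0, FM_eq m, Set.ncard_union_eq ?disj
      ((Sset_finite L (m+1)).image _) ((Sset_finite R (m+1)).image _),
    Set.ncard_image_of_injective _ (List.append_left_injective [R, C]),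
    Set.ncard_image_of_injective _ (List.append_left_injective [L, C])]
  · rfl
  case disj =>
    rw [Set.disjoint_left]
    rintro w ⟨v₁, ⟨-, -, -, hl₁⟩, rfl⟩ ⟨v₂, ⟨-, -, -, hl₂⟩, h⟩
    have hlen : v₂.length = v₁.length := by rw [hl₁, hl₂]
    obtain ⟨-, habs⟩ := List.append_inj h hlen
    simp at habs

lemma total_eq (n : ℕ) : dcnt L (n + 1) + dcnt R (n + 1) + dcnt C (n + 1) = 2 ^ n := by
  induction n with
  | zero => simp [dcnt_one_L, dcnt_one_R, dcnt_one_C]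
  | succ k ih =>
    show dcnt L (k + 2) + dcnt R (k + 2) + dcnt C (k + 2) = 2 ^ (k + 1)
    have h1 : dcnt L (k + 2) = dcnt R (k + 1) + dcnt C (k + 1) :=
      dcnt_succ L R C (by decide) (by decide) (by decide) (k+1) (by omega)
    have h2 : dcnt R (k + 2) = dcnt L (k + 1) + dcnt C (k + 1) :=
      dcnt_succ R L C (by decide) (by decide) (by decide) (k+1) (by omega)
    have h3 : dcnt C (k + 2) = dcnt L (k + 1) + dcnt R (k + 1) :=
      dcnt_succ C L R (by decide) (by decide) (by decide) (k+1) (by omega)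
    have hpow : (2 : ℕ) ^ (k + 1) = 2 ^ k + 2 ^ k := by rw [pow_succ]; ring
    rw [h1, h2, h3, hpow]
    generalize (2 : ℕ) ^ k = t at ih ⊢
    omega

lemma main_num (n : ℕ) :
    dcnt L (n + 2) + dcnt R (n + 2) + (dcnt L (n + 1) + dcnt R (n + 1)) = 2 ^ (n + 1) := by
  induction n with
  | zero =>
    show dcnt L 2 + dcnt R 2 + (dcnt L 1 + dcnt R 1) = 2 ^ 1
    have h1 : dcnt L 2 = dcnt R 1 + dcnt C 1 :=
      dcnt_succ L R C (by decide) (by decide) (by decide) 1 (by omega)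
    have h2 : dcnt R 2 = dcnt L 1 + dcnt C 1 :=
      dcnt_succ R L C (by decide) (by decide) (by decide) 1 (by omega)
    rw [h1, h2, dcnt_one_L, dcnt_one_R, dcnt_one_C]
    norm_num
  | succ k ih =>
    replace ih : dcnt L (k + 2) + dcnt R (k + 2) + (dcnt L (k + 1) + dcnt R (k + 1))
        = 2 ^ (k + 1) := ih
    show dcnt L (k + 3) + dcnt R (k + 3) + (dcnt L (k + 2) + dcnt R (k + 2)) = 2 ^ (k + 2)
    have ht : dcnt L (k + 2) + dcnt R (k + 2) + dcnt C (k + 2) = 2 ^ (k + 1) :=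
      total_eq (k + 1)
    have hC : dcnt C (k + 2) = dcnt L (k + 1) + dcnt R (k + 1) :=
      dcnt_succ C L R (by decide) (by decide) (by decide) (k+1) (by omega)
    have h1 : dcnt L (k + 3) = dcnt R (k + 2) + dcnt C (k + 2) :=
      dcnt_succ L R C (by decide) (by decide) (by decide) (k+2) (by omega)
    have h2 : dcnt R (k + 3) = dcnt L (k + 2) + dcnt C (k + 2) :=
      dcnt_succ R L C (by decide) (by decide) (by decide) (k+2) (by omega)
    have hpow : (2 : ℕ) ^ (k + 2) = 2 ^ (k + 1) + 2 ^ (k + 1) := by rw [pow_succ]; ring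
    rw [h1, h2, hpow]
    generalize (2 : ℕ) ^ (k + 1) = t at ih ht ⊢
    omega

/-- For every `h ≥ 4`, `K(h) + K(h-1) = 2^(h-3)`. -/
theorem K_add_K_pred (h : ℕ) (hh : 4 ≤ h) : K h + K (h - 1) = 2 ^ (h - 3) := by
  obtain ⟨m, rfl⟩ : ∃ m, h = m + 4 := ⟨h - 4, by omega⟩
  have e1 : m + 4 = (m + 1) + 3 := by omega
  have e2 : m + 4 - 1 = m + 3 := by omega
  have e3 : m + 4 - 3 = m + 1 := by omega
  rw [e1, e2, e3, K_eq (m + 1), K_eq m]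
  exact main_num m
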